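/- arXiv:2101.09043 — 3 statements merged into one kernel-verified Lean document; each statement's English description precedes it below -/
import Mathlib

section
/- Fix integers m, n ≥ 1. The set of parameter vectors K ∈ ℝ^{m(2n-1)} for which the symmetric matrix A(K) + D has an eigenvalue of algebraic multiplicity at least two (equivalently, for which the characteristic polynomial of A(K) + D has a repeated root) has Lebesgue measure zero. -/
open MeasureTheory

/-- The block-diagonal matrix A(K) with symmetric tridiagonal blocks, with
diagonal parameters `a` and off-diagonal parameters `b`. -/
def blockTridiag {m n : ℕ} (a : Fin m → Fin n → ℝ) (b : Fin m → Fin (n - 1) → ℝ) :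
    Matrix (Fin m × Fin n) (Fin m × Fin n) ℝ :=
  Matrix.of fun p q =>
    if p.1 = q.1 then
      (if p.2 = q.2 then a p.1 p.2 else 0)
        + (∑ j : Fin (n - 1), if (p.2 : ℕ) = (j : ℕ) ∧ (q.2 : ℕ) = (j : ℕ) + 1 then b p.1 j else 0)
        + (∑ j : Fin (n - 1), if (q.2 : ℕ) = (j : ℕ) ∧ (p.2 : ℕ) = (j : ℕ) + 1 then b p.1 j else 0)
    else 0


namespace Stmt14

open Polynomial Matrix


variable {R : Type*} [CommRing R]

/-- coefficient-vector polynomial -/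
noncomputable def polyOf {a : ℕ} (c : Fin a → R) : R[X] :=
  ∑ i : Fin a, C (c i) * X ^ (i : ℕ)

lemma polyOf_coeff {a : ℕ} (c : Fin a → R) (i : Fin a) : (polyOf c).coeff i = c i := by
  simp only [polyOf, finset_sum_coeff, coeff_C_mul, coeff_X_pow]
  rw [Finset.sum_eq_single i]
  · simp
  · intro j _ hj
    have : ¬ ((i : ℕ) = (j : ℕ)) := fun h => hj (Fin.ext h.symm)
    simp [this]
  · simp

lemma polyOf_degree_lt {a : ℕ} (c : Fin a → R) : (polyOf c).degree < (a : ℕ) := by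
  apply lt_of_le_of_lt (degree_sum_le _ _)
  rw [Finset.sup_lt_iff (by exact_mod_cast WithBot.bot_lt_coe a)]
  intro i _
  exact lt_of_le_of_lt (degree_C_mul_X_pow_le _ _) (by exact_mod_cast i.2)

/-- Sylvester-type matrix of `p` and `q` with block sizes `a` (shifts of `p`)
and `b` (shifts of `q`). -/
noncomputable def sylv (a b : ℕ) (p q : R[X]) :
    Matrix (Fin a ⊕ Fin b) (Fin a ⊕ Fin b) R :=
  Matrix.of fun r c =>
    Sum.elim (fun i => (X ^ (i : ℕ) * p).coeff ((finSumFinEquiv r : Fin (a + b)) : ℕ))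
      (fun j => (X ^ (j : ℕ) * q).coeff ((finSumFinEquiv r : Fin (a + b)) : ℕ)) c

lemma sylv_map {S : Type*} [CommRing S] (f : R →+* S) (a b : ℕ) (p q : R[X]) :
    (sylv a b p q).map f = sylv a b (p.map f) (q.map f) := by
  ext r c
  cases c <;>
    simp [sylv, Matrix.map_apply, ← Polynomial.coeff_map, Polynomial.map_mul, Polynomial.map_pow]

lemma sylv_mulVec (a b : ℕ) (p q : R[X]) (c : Fin a ⊕ Fin b → R) (r : Fin a ⊕ Fin b) :
    (sylv a b p q *ᵥ c) r
      = (polyOf (c ∘ Sum.inl) * p + polyOf (c ∘ Sum.inr) * q).coeff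
          ((finSumFinEquiv r : Fin (a + b)) : ℕ) := by
  set k := ((finSumFinEquiv r : Fin (a + b)) : ℕ)
  have hcoeff : ∀ (s : ℕ) (w : Fin s → R) (f : R[X]),
      (polyOf w * f).coeff k = ∑ i : Fin s, (X ^ (i : ℕ) * f).coeff k * w i := by
    intro s w f
    rw [polyOf, Finset.sum_mul]
    rw [finset_sum_coeff]
    refine Finset.sum_congr rfl fun i _ => ?_
    rw [mul_assoc, coeff_C_mul]
    ring
  rw [coeff_add, hcoeff, hcoeff, Matrix.mulVec, dotProduct, Fintype.sum_sum_type]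
  rfl

lemma sylv_vecMul_pow (a b : ℕ) (p q : R[X]) (hp : p.natDegree ≤ b) (hq : q.natDegree ≤ a)
    (x : R) (c : Fin a ⊕ Fin b) :
    ((fun r => x ^ ((finSumFinEquiv r : Fin (a + b)) : ℕ)) ᵥ* sylv a b p q) c
      = Sum.elim (fun i : Fin a => x ^ (i : ℕ) * p.eval x)
          (fun j : Fin b => x ^ (j : ℕ) * q.eval x) c := by
  have key : ∀ (f : R[X]), f.natDegree < a + b →
      (∑ r : Fin a ⊕ Fin b,
        x ^ ((finSumFinEquiv r : Fin (a + b)) : ℕ)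
          * f.coeff ((finSumFinEquiv r : Fin (a + b)) : ℕ)) = f.eval x := by
    intro f hf
    rw [eval_eq_sum_range' hf x]
    rw [← Fin.sum_univ_eq_sum_range (fun k => f.coeff k * x ^ k) (a + b)]
    rw [← Equiv.sum_comp finSumFinEquiv (fun k : Fin (a+b) => f.coeff (k:ℕ) * x ^ (k:ℕ))]
    exact Finset.sum_congr rfl fun r _ => mul_comm _ _
  cases c with
  | inl i =>
    have hdeg : (X ^ (i : ℕ) * p).natDegree < a + b := by
      have h1 := natDegree_mul_le (p := (X : R[X]) ^ (i : ℕ)) (q := p)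
      have h2 := natDegree_X_pow_le (R := R) (i : ℕ)
      have := i.2
      omega
    simpa [Matrix.vecMul, dotProduct, sylv] using (key _ hdeg).trans (by simp [eval_mul])
  | inr j =>
    have hdeg : (X ^ (j : ℕ) * q).natDegree < a + b := by
      have h1 := natDegree_mul_le (p := (X : R[X]) ^ (j : ℕ)) (q := q)
      have h2 := natDegree_X_pow_le (R := R) (j : ℕ)
      have := j.2
      omega
    simpa [Matrix.vecMul, dotProduct, sylv] using (key _ hdeg).trans (by simp [eval_mul])

theorem sylv_det_eq_zero [IsDomain R] {a b : ℕ} (hab : 0 < a + b) {p q : R[X]}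
    (hp : p.natDegree ≤ b) (hq : q.natDegree ≤ a) {x : R}
    (hpx : p.eval x = 0) (hqx : q.eval x = 0) :
    (sylv a b p q).det = 0 := by
  rw [← Matrix.exists_vecMul_eq_zero_iff]
  refine ⟨fun r => x ^ ((finSumFinEquiv r : Fin (a + b)) : ℕ), ?_, ?_⟩
  · intro h
    have := congrFun h (finSumFinEquiv.symm ⟨0, hab⟩)
    simp at this
  · funext c
    rw [sylv_vecMul_pow a b p q hp hq x c]
    cases c <;> simp [hpx, hqx]


lemma sum_coeff_eq_zero {a b : ℕ} {u : Fin a → R} {v : Fin b → R} {p q : R[X]}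
    (hp : p.degree ≤ (b : ℕ)) (hq : q.degree ≤ (a : ℕ)) {k : ℕ} (hk : a + b ≤ k) :
    (polyOf u * p + polyOf v * q).coeff k = 0 := by
  apply coeff_eq_zero_of_degree_lt
  apply lt_of_le_of_lt (degree_add_le _ _)
  have h1 : (polyOf u * p).degree < ((a + b : ℕ) : WithBot ℕ) := by
    apply lt_of_le_of_lt (degree_mul_le _ _)
    calc (polyOf u).degree + p.degree < (a : ℕ) + ((b : ℕ) : WithBot ℕ) := by
          by_cases hp0 : p = 0
          · simp [hp0]
          · exact WithBot.add_lt_add_of_lt_of_le (by simpa using hp0) (polyOf_degree_lt u) hp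
      _ = ((a + b : ℕ) : WithBot ℕ) := by push_cast; ring
  have h2 : (polyOf v * q).degree < ((a + b : ℕ) : WithBot ℕ) := by
    apply lt_of_le_of_lt (degree_mul_le _ _)
    calc (polyOf v).degree + q.degree < (b : ℕ) + ((a : ℕ) : WithBot ℕ) := by
          by_cases hq0 : q = 0
          · simp [hq0]
          · exact WithBot.add_lt_add_of_lt_of_le (by simpa using hq0) (polyOf_degree_lt v) hq
      _ = ((a + b : ℕ) : WithBot ℕ) := by push_cast; ring
  have hkc : ((a + b : ℕ) : WithBot ℕ) ≤ (k : ℕ) := by exact_mod_cast hk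
  exact lt_of_lt_of_le (max_lt h1 h2) hkc

theorem sylv_det_ne_zero {K : Type*} [Field K] {b : ℕ} (a : ℕ) {p q : K[X]}
    (hpm : p.Monic) (hpb : p.natDegree = b) (hb : 0 < b)
    (hq : q.natDegree ≤ a) (hcop : IsCoprime p q) :
    (sylv a b p q).det ≠ 0 := by
  intro hdet
  obtain ⟨c, hc0, hc⟩ := Matrix.exists_mulVec_eq_zero_iff.mpr hdet
  set u := polyOf (c ∘ Sum.inl) with hu
  set v := polyOf (c ∘ Sum.inr) with hv
  have hpdeg : p.degree ≤ (b : ℕ) := by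
    rw [degree_eq_natDegree hpm.ne_zero, hpb]
  have hqdeg : q.degree ≤ (a : ℕ) := Polynomial.natDegree_le_iff_degree_le.mp hq
  have hzero : u * p + v * q = 0 := by
    ext k
    by_cases hk : k < a + b
    · have := congrFun hc (finSumFinEquiv.symm ⟨k, hk⟩)
      rw [sylv_mulVec] at this
      simpa using this
    · rw [coeff_zero]
      exact sum_coeff_eq_zero hpdeg hqdeg (le_of_not_gt hk)
  have hpdvd : p ∣ v * q := ⟨-u, by linear_combination hzero⟩
  have hv0 : v = 0 := by
    by_contra hvne
    have hdvd : p ∣ v := hcop.dvd_of_dvd_mul_right hpdvd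
    have h1 : p.natDegree ≤ v.natDegree := natDegree_le_of_dvd hdvd hvne
    have h2 : v.degree < (b : ℕ) := polyOf_degree_lt _
    have h3 : v.natDegree < b := by
      rwa [degree_eq_natDegree hvne, Nat.cast_lt] at h2
    omega
  have hu0 : u = 0 := by
    have : u * p = 0 := by rw [hv0, zero_mul, add_zero] at hzero; exact hzero
    rcases mul_eq_zero.mp this with h | h
    · exact h
    · exact absurd h hpm.ne_zero
  apply hc0
  funext r
  cases r with
  | inl i =>
    have := polyOf_coeff (c ∘ Sum.inl) i
    rw [← hu, hu0, coeff_zero] at this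
    exact this.symm
  | inr j =>
    have := polyOf_coeff (c ∘ Sum.inr) j
    rw [← hv, hv0, coeff_zero] at this
    exact this.symm

theorem sylv_isCoprime {K : Type*} [Field K] {a b : ℕ} (hab : 0 < a + b) {p q : K[X]}
    (hp : p.degree ≤ (b : ℕ)) (hq : q.degree ≤ (a : ℕ))
    (hdet : (sylv a b p q).det ≠ 0) : IsCoprime p q := by
  have hunit : IsUnit (sylv a b p q).det := (isUnit_iff_ne_zero).mpr hdet
  set e : Fin a ⊕ Fin b → K := fun r => if r = finSumFinEquiv.symm ⟨0, hab⟩ then 1 else 0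
  set c := (sylv a b p q)⁻¹ *ᵥ e with hcdef
  have hAc : sylv a b p q *ᵥ c = e := by
    rw [hcdef, Matrix.mulVec_mulVec, Matrix.mul_nonsing_inv _ hunit, Matrix.one_mulVec]
  refine ⟨polyOf (c ∘ Sum.inl), polyOf (c ∘ Sum.inr), ?_⟩
  have : polyOf (c ∘ Sum.inl) * p + polyOf (c ∘ Sum.inr) * q = 1 := by
    ext k
    by_cases hk : k < a + b
    · have := congrFun hAc (finSumFinEquiv.symm ⟨k, hk⟩)
      rw [sylv_mulVec] at this
      simp only [Equiv.apply_symm_apply] at this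
      rw [this]
      simp only [e, coeff_one]
      by_cases hk0 : k = 0
      · subst hk0
        simp [Equiv.symm_apply_eq]
      · have : ¬ (finSumFinEquiv.symm (⟨k, hk⟩ : Fin (a+b)) = finSumFinEquiv.symm ⟨0, hab⟩) := by
          intro h
          apply hk0
          have := congrArg finSumFinEquiv h
          simp only [Equiv.apply_symm_apply] at this
          exact congrArg Fin.val this
        simp [this, hk0]
    · rw [sum_coeff_eq_zero hp hq (le_of_not_gt hk), coeff_one]
      have : k ≠ 0 := by omega
      simp [this]
  exact this


open MeasureTheory MvPolynomial in
lemma measurableSet_eval_zero {ι : Type*} [Fintype ι] (P : MvPolynomial ι ℝ) :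
    MeasurableSet {x : ι → ℝ | MvPolynomial.eval x P = 0} :=
  (MvPolynomial.continuous_eval P).measurable (measurableSet_singleton 0)

open MeasureTheory MvPolynomial in
lemma mvpoly_null_fin : ∀ (k : ℕ) (P : MvPolynomial (Fin k) ℝ), P ≠ 0 →
    volume {x : Fin k → ℝ | MvPolynomial.eval x P = 0} = 0 := by
  intro k
  induction k with
  | zero =>
    intro P hP
    obtain ⟨c, rfl⟩ := MvPolynomial.C_surjective (Fin 0) P
    have hc : c ≠ 0 := fun h => hP (by rw [h, map_zero])
    convert measure_empty (μ := volume)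
    ext x
    simp [hc]
  | succ k ih =>
    intro P hP
    set e := MeasurableEquiv.piFinSuccAbove (fun _ : Fin (k+1) => ℝ) 0 with he
    have hmp : MeasurePreserving e volume volume := volume_preserving_piFinSuccAbove _ 0
    set T : Set (ℝ × (Fin k → ℝ)) := {yx | MvPolynomial.eval (Fin.cons yx.1 yx.2) P = 0} with hT
    have hTmeas : MeasurableSet T := by
      have hcont : Continuous (fun yx : ℝ × (Fin k → ℝ) => MvPolynomial.eval (Fin.cons yx.1 yx.2) P) := by
        apply (MvPolynomial.continuous_eval P).comp
        apply continuous_pi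
        intro i
        refine Fin.cases ?_ ?_ i
        · simpa using continuous_fst
        · intro j
          simpa [Function.comp_def] using (continuous_apply j).comp continuous_snd
      exact hcont.measurable (measurableSet_singleton 0)
    have hET : {x : Fin (k+1) → ℝ | MvPolynomial.eval x P = 0} = e ⁻¹' T := by
      ext x
      have hx : Fin.cons (x 0) (fun j => x j.succ) = x := by
        funext i
        refine Fin.cases ?_ ?_ i <;> simp
      have hex : Fin.cons (e x).1 (e x).2 = x := by
        funext i
        refine Fin.cases ?_ ?_ i <;>
          simp [he, MeasurableEquiv.piFinSuccAbove, Fin.succAbove, Fin.tail]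
      simp only [Set.mem_setOf_eq, Set.mem_preimage, hT, hex]
    rw [hET, hmp.measure_preimage hTmeas.nullMeasurableSet]
    -- swap coordinates
    set T' : Set ((Fin k → ℝ) × ℝ) := {xy | MvPolynomial.eval (Fin.cons xy.2 xy.1) P = 0} with hT'
    have hT'meas : MeasurableSet T' := by
      have hcont : Continuous (fun xy : (Fin k → ℝ) × ℝ => MvPolynomial.eval (Fin.cons xy.2 xy.1) P) := by
        apply (MvPolynomial.continuous_eval P).comp
        apply continuous_pi
        intro i
        refine Fin.cases ?_ ?_ i
        · simpa using continuous_snd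
        · intro j
          simpa [Function.comp_def] using (continuous_apply j).comp continuous_fst
      exact hcont.measurable (measurableSet_singleton 0)
    have hswap : T = Prod.swap ⁻¹' T' := rfl
    have : (volume : Measure (ℝ × (Fin k → ℝ))) T = volume T' := by
      rw [hswap, Measure.volume_eq_prod, Measure.volume_eq_prod,
        MeasureTheory.Measure.measurePreserving_swap.measure_preimage hT'meas.nullMeasurableSet]
    rw [this]
    -- Fubini
    rw [Measure.volume_eq_prod, MeasureTheory.Measure.measure_prod_null hT'meas]
    -- coefficients of P as a polynomial in the first variable
    set f := MvPolynomial.finSuccEquiv ℝ k P with hf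
    have hf0 : f ≠ 0 := by
      intro h
      apply hP
      have := congrArg (MvPolynomial.finSuccEquiv ℝ k).symm h
      simpa [hf] using this
    obtain ⟨i, hi⟩ : ∃ i, f.coeff i ≠ 0 := by
      by_contra h
      push_neg at h
      exact hf0 (Polynomial.ext fun i => by simp [h i])
    have hbad : volume {s : Fin k → ℝ | MvPolynomial.eval s (f.coeff i) = 0} = 0 :=
      ih _ hi
    have hbadae : ∀ᵐ s : Fin k → ℝ, MvPolynomial.eval s (f.coeff i) ≠ 0 := by
      rw [MeasureTheory.ae_iff]
      simpa using hbad
    filter_upwards [hbadae] with s hs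
    have hQ : (f.map (MvPolynomial.eval s)) ≠ 0 := by
      intro h
      apply hs
      have := congrArg (fun g => Polynomial.coeff g i) h
      simpa using this
    have hfin : Set.Finite {y : ℝ | (f.map (MvPolynomial.eval s)).eval y = 0} :=
      Polynomial.finite_setOf_isRoot hQ
    have : (Prod.mk s ⁻¹' T') = {y : ℝ | (f.map (MvPolynomial.eval s)).eval y = 0} := by
      ext y
      simp only [Set.mem_preimage, hT', Set.mem_setOf_eq]
      rw [MvPolynomial.eval_eq_eval_mv_eval']
    simp only [Pi.zero_apply]
    rw [this]
    exact hfin.measure_zero _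

open MeasureTheory MvPolynomial in
lemma mvpoly_null {ι : Type*} [Fintype ι] (P : MvPolynomial ι ℝ) (hP : P ≠ 0) :
    volume {x : ι → ℝ | MvPolynomial.eval x P = 0} = 0 := by
  classical
  set k := Fintype.card ι
  set eqv : Fin k ≃ ι := (Fintype.equivFin ι).symm with heqv
  set T := MeasurableEquiv.piCongrLeft (fun _ : ι => ℝ) eqv with hTdef
  have hmp : MeasurePreserving T volume volume := volume_measurePreserving_piCongrLeft _ eqv
  have hpre : T ⁻¹' {x : ι → ℝ | MvPolynomial.eval x P = 0}
      = {y : Fin k → ℝ | MvPolynomial.eval y (MvPolynomial.rename eqv.symm P) = 0} := by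
    ext y
    simp only [Set.mem_preimage, Set.mem_setOf_eq, MvPolynomial.eval_rename]
    have hTy : (T y : ι → ℝ) = y ∘ eqv.symm := by
      funext i
      simp [hTdef, MeasurableEquiv.piCongrLeft, Equiv.piCongrLeft]
    rw [hTy]
  have hren : MvPolynomial.rename eqv.symm P ≠ 0 := fun h =>
    hP (MvPolynomial.rename_injective _ eqv.symm.injective (by simpa using h))
  rw [← hmp.measure_preimage (measurableSet_eval_zero P).nullMeasurableSet, hpre]
  exact mvpoly_null_fin k _ hren


open MeasureTheory in
/-- uncurrying as a measurable equiv -/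
noncomputable def uncurryME (α β : Type*) [Fintype α] [Fintype β] :
    (α → β → ℝ) ≃ᵐ (α × β → ℝ) where
  toEquiv := (Equiv.curry α β ℝ).symm
  measurable_toFun := measurable_pi_lambda _ fun p =>
    (measurable_pi_apply p.2).comp (measurable_pi_apply p.1)
  measurable_invFun := measurable_pi_lambda _ fun a => measurable_pi_lambda _ fun b =>
    measurable_pi_apply (a, b)

open MeasureTheory in
lemma uncurryME_measurePreserving (α β : Type*) [Fintype α] [Fintype β] :
    MeasurePreserving (uncurryME α β) volume volume := by
  classical
  refine ⟨(uncurryME α β).measurable, ?_⟩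
  have hmeq : Measure.pi (fun _ : α × β => (volume : Measure ℝ))
      = Measure.map (uncurryME α β) volume := by
    refine Measure.pi_eq fun s hs => ?_
    rw [Measure.map_apply (uncurryME α β).measurable (MeasurableSet.univ_pi hs)]
    have hpre : (uncurryME α β) ⁻¹' Set.univ.pi s
        = Set.univ.pi (fun a => Set.univ.pi fun b => s (a, b)) := by
      ext f
      simp [uncurryME, Equiv.curry, Set.mem_pi, Prod.forall, Function.uncurry]
    rw [hpre, volume_pi_pi, Fintype.prod_prod_type]
    refine Finset.prod_congr rfl fun a _ => ?_
    exact volume_pi_pi _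
  exact hmeq.symm

open MeasureTheory in
/-- The key measure-zero lemma on the parameter space. -/
lemma param_null {m n n' : ℕ}
    (P : MvPolynomial ((Fin m × Fin n) ⊕ (Fin m × Fin n')) ℝ) (hP : P ≠ 0) :
    volume { K : (Fin m → Fin n → ℝ) × (Fin m → Fin n' → ℝ) |
      MvPolynomial.eval
        (Sum.elim (fun p => K.1 p.1 p.2) (fun p => K.2 p.1 p.2)) P = 0 } = 0 := by
  classical
  let ι := (Fin m × Fin n) ⊕ (Fin m × Fin n')
  set g₁ := uncurryME (Fin m) (Fin n)
  set g₂ := uncurryME (Fin m) (Fin n')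
  set e₂ := (MeasurableEquiv.sumPiEquivProdPi (fun _ : ι => ℝ)).symm
  set κ : (Fin m → Fin n → ℝ) × (Fin m → Fin n' → ℝ) → (ι → ℝ) :=
    fun K => e₂ (g₁ K.1, g₂ K.2) with hκ
  have hmp : MeasurePreserving κ volume volume := by
    have h1 : MeasurePreserving (Prod.map g₁ g₂)
        ((volume : Measure (Fin m → Fin n → ℝ)).prod volume)
        ((volume : Measure (Fin m × Fin n → ℝ)).prod volume) :=
      (uncurryME_measurePreserving _ _).prod (uncurryME_measurePreserving _ _)
    have h2 : MeasurePreserving e₂ _ volume :=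
      (volume_measurePreserving_sumPiEquivProdPi (fun _ : ι => ℝ)).symm _
    have : κ = e₂ ∘ Prod.map g₁ g₂ := rfl
    rw [this, Measure.volume_eq_prod]
    exact h2.comp h1
  have hset : { K : (Fin m → Fin n → ℝ) × (Fin m → Fin n' → ℝ) |
      MvPolynomial.eval
        (Sum.elim (fun p => K.1 p.1 p.2) (fun p => K.2 p.1 p.2)) P = 0 }
      = κ ⁻¹' {x : ι → ℝ | MvPolynomial.eval x P = 0} := by
    ext K
    have : κ K = Sum.elim (fun p => K.1 p.1 p.2) (fun p => K.2 p.1 p.2) := by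
      funext i
      cases i <;> rfl
    simp [this]
  rw [hset, hmp.measure_preimage (measurableSet_eval_zero P).nullMeasurableSet]
  exact mvpoly_null P hP


section Glue

open Polynomial Matrix

lemma det_sylv_map {R S : Type*} [CommRing R] [CommRing S] (f : R →+* S) {P : Type*} [Fintype P]
    [DecidableEq P] (M : Matrix P P R) (a b : ℕ) :
    f (sylv a b M.charpoly (derivative M.charpoly)).det
      = (sylv a b (M.map f).charpoly (derivative (M.map f).charpoly)).det := by
  rw [RingHom.map_det]
  congr 1
  have : (f.mapMatrix (sylv a b M.charpoly (derivative M.charpoly)))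
      = (sylv a b M.charpoly (derivative M.charpoly)).map f := rfl
  rw [this, sylv_map, Matrix.charpoly_map, derivative_map]

lemma charpoly_diagonal {R : Type*} [CommRing R] {P : Type*} [Fintype P] [DecidableEq P]
    (d : P → R) :
    (Matrix.diagonal d).charpoly = ∏ p : P, (X - C (d p)) := by
  have h : (Matrix.diagonal d).charmatrix = Matrix.diagonal fun p => (X : R[X]) - C (d p) := by
    ext p q
    by_cases hpq : p = q
    · subst hpq
      rw [charmatrix_apply_eq]
      simp [Matrix.diagonal_apply_eq]
    · rw [charmatrix_apply_ne _ _ _ hpq]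
      simp [Matrix.diagonal_apply_ne _ hpq]
  rw [Matrix.charpoly, h, Matrix.det_diagonal]

lemma blockTridiag_zero {m n : ℕ} (a : Fin m → Fin n → ℝ) :
    blockTridiag a (fun _ _ => 0) = Matrix.diagonal (fun p => a p.1 p.2) := by
  ext p q
  rcases p with ⟨p1, p2⟩
  rcases q with ⟨q1, q2⟩
  simp only [blockTridiag, Matrix.of_apply, Finset.sum_const_zero, add_zero, ite_self,
    Matrix.diagonal_apply]
  by_cases h1 : p1 = q1
  · by_cases h2 : p2 = q2
    · simp [h1, h2, Prod.ext_iff]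
    · simp [h1, h2, Prod.ext_iff]
  · simp [h1, Prod.ext_iff]

variable {m n : ℕ}

/-- generic version of `blockTridiag K.1 K.2 + D` with polynomial variables as parameters -/
noncomputable def genM (D : Matrix (Fin m × Fin n) (Fin m × Fin n) ℝ) :
    Matrix (Fin m × Fin n) (Fin m × Fin n)
      (MvPolynomial ((Fin m × Fin n) ⊕ (Fin m × Fin (n - 1))) ℝ) :=
  Matrix.of fun p q =>
    (if p.1 = q.1 then
      (if p.2 = q.2 then MvPolynomial.X (Sum.inl p) else 0)
        + (∑ j : Fin (n - 1), if (p.2 : ℕ) = (j : ℕ) ∧ (q.2 : ℕ) = (j : ℕ) + 1 then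
            MvPolynomial.X (Sum.inr (p.1, j)) else 0)
        + (∑ j : Fin (n - 1), if (q.2 : ℕ) = (j : ℕ) ∧ (p.2 : ℕ) = (j : ℕ) + 1 then
            MvPolynomial.X (Sum.inr (p.1, j)) else 0)
    else 0) + MvPolynomial.C (D p q)

lemma genM_eval (D : Matrix (Fin m × Fin n) (Fin m × Fin n) ℝ)
    (K : (Fin m → Fin n → ℝ) × (Fin m → Fin (n - 1) → ℝ)) :
    (genM D).map
        (MvPolynomial.eval (Sum.elim (fun p => K.1 p.1 p.2) (fun p => K.2 p.1 p.2)))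
      = blockTridiag K.1 K.2 + D := by
  set w := Sum.elim (fun p : Fin m × Fin n => K.1 p.1 p.2)
    (fun p : Fin m × Fin (n - 1) => K.2 p.1 p.2) with hw
  ext p q
  show MvPolynomial.eval w _ = _
  simp only [genM, blockTridiag, Matrix.map_apply, Matrix.of_apply, Matrix.add_apply,
    map_add, MvPolynomial.eval_C]
  congr 1
  rw [apply_ite (MvPolynomial.eval w)]
  simp only [map_add, map_sum, map_zero, apply_ite (MvPolynomial.eval w),
    MvPolynomial.eval_X, hw, Sum.elim_inl, Sum.elim_inr]
  simp only [apply_ite (MvPolynomial.eval (Sum.elim (fun p : Fin m × Fin n => K.1 p.1 p.2)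
    (fun p : Fin m × Fin (n - 1) => K.2 p.1 p.2))), MvPolynomial.eval_X, map_zero,
    Sum.elim_inl, Sum.elim_inr]

/-- the "discriminant" polynomial in the parameters -/
noncomputable def bigP (D : Matrix (Fin m × Fin n) (Fin m × Fin n) ℝ) :
    MvPolynomial ((Fin m × Fin n) ⊕ (Fin m × Fin (n - 1))) ℝ :=
  (sylv (m * n - 1) (m * n) (genM D).charpoly (derivative (genM D).charpoly)).det

lemma bigP_eval (D : Matrix (Fin m × Fin n) (Fin m × Fin n) ℝ)
    (K : (Fin m → Fin n → ℝ) × (Fin m → Fin (n - 1) → ℝ)) :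
    MvPolynomial.eval (Sum.elim (fun p => K.1 p.1 p.2) (fun p => K.2 p.1 p.2)) (bigP D)
      = (sylv (m * n - 1) (m * n) (blockTridiag K.1 K.2 + D).charpoly
          (derivative (blockTridiag K.1 K.2 + D).charpoly)).det := by
  have h := det_sylv_map
    (MvPolynomial.eval (Sum.elim (fun p => K.1 p.1 p.2) (fun p => K.2 p.1 p.2)))
    (genM D) (m * n - 1) (m * n)
  rw [genM_eval] at h
  rw [bigP]
  exact h

end Glue

end Stmt14

open Polynomial Matrix Stmt14 in
/-- the set of parameter vectors K for which A(K) + D has a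
repeated eigenvalue (a repeated root of its characteristic polynomial) has
Lebesgue measure zero. -/
theorem stmt_14 (m n : ℕ) (hm : 1 ≤ m) (hn : 1 ≤ n)
    (h₁ h₂ : ℝ) (hh₁ : 0 < h₁) (hh₂ : 0 < h₂)
    (v : Fin m × Fin n → ℝ) (hv : ∀ p, 0 ≤ v p)
    (D : Matrix (Fin m × Fin n) (Fin m × Fin n) ℝ)
    (hDdiag : ∀ p : Fin m × Fin n, D p p = 1 / h₁ ^ 2 + 1 / h₂ ^ 2 + v p)
    (hDvert : ∀ (i : Fin m) (j j' : Fin n), |(j : ℤ) - (j' : ℤ)| = 1 →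
      D (i, j) (i, j') = -(1 / (2 * h₂ ^ 2)))
    (hDhor : ∀ (i i' : Fin m) (j : Fin n), |(i : ℤ) - (i' : ℤ)| = 1 →
      D (i, j) (i', j) = -(1 / (2 * h₁ ^ 2)))
    (hDzero : ∀ p q : Fin m × Fin n, p ≠ q →
      ¬(p.1 = q.1 ∧ |(p.2 : ℤ) - (q.2 : ℤ)| = 1) →
      ¬(p.2 = q.2 ∧ |(p.1 : ℤ) - (q.1 : ℤ)| = 1) → D p q = 0) :
    volume { K : (Fin m → Fin n → ℝ) × (Fin m → Fin (n - 1) → ℝ) |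
      ∃ μ : ℝ, (Polynomial.X - Polynomial.C μ) ^ 2 ∣
        (blockTridiag K.1 K.2 + D).charpoly } = 0 := by
  classical
  have hN : 0 < m * n := Nat.mul_pos hm hn
  have hcard : Fintype.card (Fin m × Fin n) = m * n := by simp
  have hab : 0 < (m * n - 1) + (m * n) := by omega
  -- degree facts, for any real matrix of this shape
  have hdegM : ∀ M : Matrix (Fin m × Fin n) (Fin m × Fin n) ℝ,
      M.charpoly.natDegree = m * n := fun M => by
    rw [Matrix.charpoly_natDegree_eq_dim, hcard]
  -- Step 1 : the witness showing `bigP D ≠ 0`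
  have hbigP : bigP D ≠ 0 := by
    set d : Fin m × Fin n → ℝ := fun p => ((finProdFinEquiv p : Fin (m * n)) : ℕ) with hd
    have hdinj : Function.Injective d := by
      intro p q h
      apply finProdFinEquiv.injective
      apply Fin.ext
      simp only [hd] at h
      exact_mod_cast h
    set Λ : Matrix (Fin m × Fin n) (Fin m × Fin n) ℝ := Matrix.diagonal d with hΛ
    set MatT : Matrix (Fin m × Fin n) (Fin m × Fin n) ℝ[X] :=
      Λ.map C + (X : ℝ[X]) • D.map C with hMatT
    set FF : ℝ[X] :=
      (sylv (m * n - 1) (m * n) MatT.charpoly (derivative MatT.charpoly)).det with hFF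
    have hmap : ∀ s : ℝ, MatT.map (evalRingHom s) = Λ + s • D := by
      intro s
      ext p q
      simp only [hMatT, Matrix.map_apply, Matrix.add_apply, Matrix.smul_apply, smul_eq_mul,
        coe_evalRingHom, eval_add, eval_mul, eval_C, eval_X]
    have hFF0 : FF.eval 0 ≠ 0 := by
      have h0 : (evalRingHom 0) FF
          = (sylv (m * n - 1) (m * n) (Λ + (0:ℝ) • D).charpoly
              (derivative (Λ + (0:ℝ) • D).charpoly)).det := by
        rw [hFF, det_sylv_map, hmap]
      have hΛ0 : Λ + (0:ℝ) • D = Λ := by simp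
      rw [show FF.eval 0 = (evalRingHom 0) FF from rfl, h0, hΛ0]
      refine sylv_det_ne_zero (m * n - 1) (Matrix.charpoly_monic Λ) (hdegM Λ) hN ?_ ?_
      · have := natDegree_derivative_le Λ.charpoly
        rw [hdegM Λ] at this
        exact this
      · have hsep : Λ.charpoly.Separable := by
          rw [hΛ, Stmt14.charpoly_diagonal]
          exact separable_prod_X_sub_C_iff.mpr hdinj
        exact hsep
    have hFFne : FF ≠ 0 := fun h => hFF0 (by rw [h]; simp)
    obtain ⟨s₀, hs₀ne, hs₀⟩ : ∃ s₀ : ℝ, s₀ ≠ 0 ∧ FF.eval s₀ ≠ 0 := by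
      have hfin : Set.Finite (insert (0:ℝ) {x : ℝ | FF.eval x = 0}) :=
        (Polynomial.finite_setOf_isRoot hFFne).insert 0
      obtain ⟨x, hx⟩ := hfin.infinite_compl.nonempty
      refine ⟨x, ?_, ?_⟩ <;> simp only [Set.mem_compl_iff, Set.mem_insert_iff,
        Set.mem_setOf_eq, not_or] at hx
      · exact hx.1
      · exact hx.2
    set M₁ := Λ + s₀ • D with hM₁
    have h1 : (sylv (m * n - 1) (m * n) M₁.charpoly (derivative M₁.charpoly)).det ≠ 0 := by
      rw [hM₁, ← hmap s₀, ← det_sylv_map]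
      exact hs₀
    have hcop1 : IsCoprime M₁.charpoly (derivative M₁.charpoly) := by
      refine sylv_isCoprime hab ?_ ?_ h1
      · exact natDegree_le_iff_degree_le.mp (le_of_eq (hdegM M₁))
      · refine natDegree_le_iff_degree_le.mp ?_
        have := natDegree_derivative_le M₁.charpoly
        rw [hdegM M₁] at this
        exact this
    set c := s₀⁻¹ with hc
    have hcs : c * s₀ = 1 := inv_mul_cancel₀ hs₀ne
    set M₂ := c • M₁ with hM₂def
    set φ : ℝ[X] →+* ℝ[X] := Polynomial.eval₂RingHom (C : ℝ →+* ℝ[X]) (C s₀ * X) with hφ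
    have hφX : φ X = C s₀ * X := by simp [hφ]
    have hφC : ∀ r : ℝ, φ (C r) = C r := fun r => by simp [hφ]
    have hcm : M₂.charmatrix = (C c) • (M₁.charmatrix.map φ) := by
      ext p q
      by_cases hpq : p = q
      · subst hpq
        rw [charmatrix_apply_eq, Matrix.smul_apply, Matrix.map_apply, charmatrix_apply_eq,
          map_sub, hφX, hφC]
        rw [smul_eq_mul, mul_sub, ← mul_assoc, ← C_mul, hcs, C_1, one_mul, ← C_mul]
        rw [hM₂def, Matrix.smul_apply, smul_eq_mul]
      · rw [charmatrix_apply_ne _ _ _ hpq, Matrix.smul_apply, Matrix.map_apply,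
          charmatrix_apply_ne _ _ _ hpq, map_neg, hφC]
        rw [smul_eq_mul, mul_neg, ← C_mul]
        rw [hM₂def, Matrix.smul_apply, smul_eq_mul]
    have hp2 : M₂.charpoly = C (c ^ (m * n)) * φ M₁.charpoly := by
      rw [Matrix.charpoly, hcm, Matrix.det_smul, hcard, Matrix.charpoly]
      have hmm : M₁.charmatrix.map ⇑φ = φ.mapMatrix M₁.charmatrix := rfl
      rw [hmm, ← RingHom.map_det, C_pow]
    have hder2 : derivative M₂.charpoly
        = C (c ^ (m * n)) * (C s₀ * φ (derivative M₁.charpoly)) := by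
      rw [hp2, derivative_C_mul]
      congr 1
      have hcomp : φ M₁.charpoly = M₁.charpoly.comp (C s₀ * X) := rfl
      have hcomp' : φ (derivative M₁.charpoly) = (derivative M₁.charpoly).comp (C s₀ * X) := rfl
      rw [hcomp, derivative_comp, hcomp']
      congr 1
      rw [derivative_C_mul, derivative_X, mul_one]
    have hcop2 : IsCoprime M₂.charpoly (derivative M₂.charpoly) := by
      have hu1 : IsUnit (C (c ^ (m * n)) : ℝ[X]) :=
        Polynomial.isUnit_C.mpr (isUnit_iff_ne_zero.mpr (pow_ne_zero _ (inv_ne_zero hs₀ne)))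
      have hu2 : IsUnit (C s₀ : ℝ[X]) :=
        Polynomial.isUnit_C.mpr (isUnit_iff_ne_zero.mpr hs₀ne)
      rw [hder2, hp2]
      rw [(isCoprime_mul_unit_left_left hu1 _ _ : _ ↔ _)]
      rw [(isCoprime_mul_unit_left_right hu1 _ _ : _ ↔ _)]
      rw [(isCoprime_mul_unit_left_right hu2 _ _ : _ ↔ _)]
      exact hcop1.map φ
    -- the witness parameter vector
    set K₁ : (Fin m → Fin n → ℝ) × (Fin m → Fin (n - 1) → ℝ) :=
      (fun i j => c * d (i, j), fun _ _ => 0) with hK₁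
    have hM₂eq : blockTridiag K₁.1 K₁.2 + D = M₂ := by
      rw [hK₁]
      show blockTridiag (fun i j => c * d (i, j)) (fun _ _ => 0) + D = M₂
      rw [blockTridiag_zero]
      rw [hM₂def, hM₁, smul_add, smul_smul, hcs, one_smul, hΛ]
      congr 1
      rw [← Matrix.diagonal_smul]
      congr 1
    intro hzero
    have := bigP_eval D K₁
    rw [hzero, map_zero, hM₂eq] at this
    refine sylv_det_ne_zero (m * n - 1) (Matrix.charpoly_monic M₂) (hdegM M₂) hN ?_ hcop2 this.symm
    have h := natDegree_derivative_le M₂.charpoly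
    rw [hdegM M₂] at h
    exact h
  -- Step 2 : the bad set is contained in the zero set of `bigP D`
  have hsub : { K : (Fin m → Fin n → ℝ) × (Fin m → Fin (n - 1) → ℝ) |
      ∃ μ : ℝ, (Polynomial.X - Polynomial.C μ) ^ 2 ∣ (blockTridiag K.1 K.2 + D).charpoly }
      ⊆ { K : (Fin m → Fin n → ℝ) × (Fin m → Fin (n - 1) → ℝ) |
        MvPolynomial.eval
          (Sum.elim (fun p => K.1 p.1 p.2) (fun p => K.2 p.1 p.2)) (bigP D) = 0 } := by
    rintro K ⟨μ, hdvd⟩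
    set pK := (blockTridiag K.1 K.2 + D).charpoly with hpK
    have hev : pK.eval μ = 0 := by
      have h1 : (X - C μ) ∣ pK := dvd_trans (dvd_pow_self _ two_ne_zero) hdvd
      exact eval_eq_zero_of_dvd_of_eval_eq_zero h1 (by simp)
    have hder : (derivative pK).eval μ = 0 := by
      obtain ⟨r, hr⟩ := hdvd
      rw [hr, derivative_mul, derivative_pow]
      simp
    show MvPolynomial.eval _ (bigP D) = 0
    rw [bigP_eval]
    refine sylv_det_eq_zero hab ?_ ?_ hev hder
    · exact le_of_eq (hdegM _)
    · have h := natDegree_derivative_le pK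
      rw [hpK, hdegM] at h
      exact h
  refine measure_mono_null hsub ?_
  exact param_null (bigP D) hbigP
end

section
/- Let M = (1-t)·A + D - λ·I, where t, λ ∈ ℝ are arbitrary, I is the identity, D is the 2D discretization matrix, and A is any real matrix indexed by Fin m × Fin n that is block diagonal with symmetric tridiagonal blocks, i.e. A (i,j) (i',j') = 0 unless i = i' and |j - j'| ≤ 1, and A is symmetric. Then the rows of M indexed by grid points (i,j) with i ≥ 2 form a linearly independent family, and likewise the rows of M indexed by grid points (i,j) with i ≤ m-1 form a linearly independent family. -/
/-- for M = (1-t)A + D - λI with A block diagonal with symmetric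
tridiagonal blocks, the rows of M indexed by grid points not in the first
column of the grid (resp. not in the last column) are linearly independent.
Grid indices are 0-based here: `(i,j)` with `0 ≤ i ≤ m-1`, so "i ≥ 2"
(1-based) reads `1 ≤ i` and "i ≤ m-1" (1-based) reads `i + 2 ≤ m`. -/
theorem stmt_16 (m n : ℕ) (hm : 1 ≤ m) (hn : 1 ≤ n)
    (h₁ h₂ : ℝ) (hh₁ : 0 < h₁) (hh₂ : 0 < h₂)
    (v : Fin m × Fin n → ℝ) (hv : ∀ p, 0 ≤ v p)
    (D : Matrix (Fin m × Fin n) (Fin m × Fin n) ℝ)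
    (hDdiag : ∀ p : Fin m × Fin n, D p p = 1 / h₁ ^ 2 + 1 / h₂ ^ 2 + v p)
    (hDvert : ∀ (i : Fin m) (j j' : Fin n), |(j : ℤ) - (j' : ℤ)| = 1 →
      D (i, j) (i, j') = -(1 / (2 * h₂ ^ 2)))
    (hDhor : ∀ (i i' : Fin m) (j : Fin n), |(i : ℤ) - (i' : ℤ)| = 1 →
      D (i, j) (i', j) = -(1 / (2 * h₁ ^ 2)))
    (hDzero : ∀ p q : Fin m × Fin n, p ≠ q →
      ¬(p.1 = q.1 ∧ |(p.2 : ℤ) - (q.2 : ℤ)| = 1) →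
      ¬(p.2 = q.2 ∧ |(p.1 : ℤ) - (q.1 : ℤ)| = 1) → D p q = 0)
    (A : Matrix (Fin m × Fin n) (Fin m × Fin n) ℝ)
    (hAsymm : A.IsSymm)
    (hAblock : ∀ p q : Fin m × Fin n,
      (p.1 ≠ q.1 ∨ 2 ≤ |(p.2 : ℤ) - (q.2 : ℤ)|) → A p q = 0)
    (t lam : ℝ)
    (M : Matrix (Fin m × Fin n) (Fin m × Fin n) ℝ)
    (hM : M = (1 - t) • A + D - lam • (1 : Matrix (Fin m × Fin n) (Fin m × Fin n) ℝ)) :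
    LinearIndependent ℝ (fun p : {p : Fin m × Fin n // 1 ≤ (p.1 : ℕ)} => M p.1) ∧
    LinearIndependent ℝ (fun p : {p : Fin m × Fin n // (p.1 : ℕ) + 2 ≤ m} => M p.1) := by
  have hpos : (0:ℝ) < 1 / (2 * h₁ ^ 2) := by positivity
  have e_ne : -(1 / (2 * h₁ ^ 2)) ≠ 0 := by
    intro h; rw [neg_eq_zero] at h; linarith
  -- M agrees with D off the block diagonal
  have hMne : ∀ p q : Fin m × Fin n, p.1 ≠ q.1 → M p q = D p q := by
    intro p q h
    have hpq : p ≠ q := fun e => h (by rw [e])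
    rw [hM]
    simp [Matrix.sub_apply, Matrix.add_apply, Matrix.smul_apply, Matrix.one_apply,
      hpq, hAblock p q (Or.inl h)]
  have hfar : ∀ p q : Fin m × Fin n, 2 ≤ |(p.1 : ℤ) - (q.1 : ℤ)| → M p q = 0 := by
    intro p q h
    have hne : p.1 ≠ q.1 := by
      intro e; rw [e] at h; simp at h
    rw [hMne p q hne]
    exact hDzero p q (fun e => hne (by rw [e])) (fun h' => hne h'.1)
      (fun h' => by rw [h'.2] at h; norm_num at h)
  have hoff : ∀ p q : Fin m × Fin n, p.1 ≠ q.1 → p.2 ≠ q.2 → M p q = 0 := by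
    intro p q h1 h2
    rw [hMne p q h1]
    exact hDzero p q (fun e => h1 (by rw [e])) (fun h' => h1 h'.1) (fun h' => h2 h'.1)
  have hsub : ∀ (a b : Fin m) (j : Fin n), |(a : ℤ) - (b : ℤ)| = 1 →
      M (a, j) (b, j) = -(1 / (2 * h₁ ^ 2)) := by
    intro a b j h
    have hne : a ≠ b := by
      intro e; rw [e] at h; simp at h
    rw [hMne (a, j) (b, j) hne]
    exact hDhor a b j h
  constructor
  · rw [Fintype.linearIndependent_iff]
    intro g hg
    have hq : ∀ q, (∑ p : {p : Fin m × Fin n // 1 ≤ (p.1 : ℕ)}, g p * M p.1 q) = 0 := by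
      intro q
      have := congrFun hg q
      simpa [Finset.sum_apply] using this
    have key : ∀ k : ℕ, ∀ p : {p : Fin m × Fin n // 1 ≤ (p.1 : ℕ)},
        (p.1.1 : ℕ) = k → g p = 0 := by
      intro k
      induction k using Nat.strong_induction_on with
      | _ k IH =>
        intro p hp
        have h1 : 1 ≤ (p.1.1 : ℕ) := p.2
        have hlt : (p.1.1 : ℕ) < m := p.1.1.2
        have hq1 : (p.1.1 : ℕ) - 1 < m := by omega
        set q : Fin m × Fin n := (⟨(p.1.1 : ℕ) - 1, hq1⟩, p.1.2) with hqdef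
        have hsum := hq q
        have hsingle : (∑ p' : {p : Fin m × Fin n // 1 ≤ (p.1 : ℕ)}, g p' * M p'.1 q)
            = g p * M p.1 q := by
          apply Finset.sum_eq_single_of_mem p (Finset.mem_univ _)
          intro p' _ hne
          rcases lt_trichotomy ((p'.1.1 : ℕ)) ((p.1.1 : ℕ)) with hl | he | hgt
          · have := IH (p'.1.1 : ℕ) (by omega) p' rfl
            simp [this]
          · have hj' : p'.1.2 ≠ p.1.2 := by
              intro hjj
              exact hne (Subtype.ext (Prod.ext (Fin.ext he) hjj))
            have hz : M p'.1 q = 0 := by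
              apply hoff
              · intro hE
                have := congrArg Fin.val hE
                simp [hqdef] at this
                omega
              · exact hj'
            simp [hz]
          · have hz : M p'.1 q = 0 := by
              apply hfar
              have hqv : (q.1 : ℕ) = (p.1.1 : ℕ) - 1 := rfl
              refine le_abs.mpr (Or.inl ?_)
              omega
            simp [hz]
        rw [hsingle] at hsum
        have hMval : M p.1 q = -(1 / (2 * h₁ ^ 2)) := by
          rw [show p.1 = (p.1.1, p.1.2) from rfl]
          apply hsub
          have hqv : ((⟨(p.1.1 : ℕ) - 1, hq1⟩ : Fin m) : ℕ) = (p.1.1 : ℕ) - 1 := rfl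
          rw [abs_eq (by norm_num : (0:ℤ) ≤ 1)]
          omega
        rw [hMval] at hsum
        rcases mul_eq_zero.mp hsum with h | h
        · exact h
        · exact absurd h e_ne
    intro p
    exact key _ p rfl
  · rw [Fintype.linearIndependent_iff]
    intro g hg
    have hq : ∀ q, (∑ p : {p : Fin m × Fin n // (p.1 : ℕ) + 2 ≤ m}, g p * M p.1 q) = 0 := by
      intro q
      have := congrFun hg q
      simpa [Finset.sum_apply] using this
    have key : ∀ k : ℕ, ∀ p : {p : Fin m × Fin n // (p.1 : ℕ) + 2 ≤ m},
        m - (p.1.1 : ℕ) = k → g p = 0 := by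
      intro k
      induction k using Nat.strong_induction_on with
      | _ k IH =>
        intro p hp
        have h1 : (p.1.1 : ℕ) + 2 ≤ m := p.2
        have hq1 : (p.1.1 : ℕ) + 1 < m := by omega
        set q : Fin m × Fin n := (⟨(p.1.1 : ℕ) + 1, hq1⟩, p.1.2) with hqdef
        have hsum := hq q
        have hsingle : (∑ p' : {p : Fin m × Fin n // (p.1 : ℕ) + 2 ≤ m}, g p' * M p'.1 q)
            = g p * M p.1 q := by
          apply Finset.sum_eq_single_of_mem p (Finset.mem_univ _)
          intro p' _ hne
          rcases lt_trichotomy ((p'.1.1 : ℕ)) ((p.1.1 : ℕ)) with hl | he | hgt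
          · have hz : M p'.1 q = 0 := by
              apply hfar
              have hqv : (q.1 : ℕ) = (p.1.1 : ℕ) + 1 := rfl
              refine le_abs.mpr (Or.inr ?_)
              omega
            simp [hz]
          · have hj' : p'.1.2 ≠ p.1.2 := by
              intro hjj
              exact hne (Subtype.ext (Prod.ext (Fin.ext he) hjj))
            have hz : M p'.1 q = 0 := by
              apply hoff
              · intro hE
                have := congrArg Fin.val hE
                simp [hqdef] at this
                omega
              · exact hj'
            simp [hz]
          · have h2 : (p'.1.1 : ℕ) + 2 ≤ m := p'.2
            have := IH (m - (p'.1.1 : ℕ)) (by omega) p' rfl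
            simp [this]
        rw [hsingle] at hsum
        have hMval : M p.1 q = -(1 / (2 * h₁ ^ 2)) := by
          rw [show p.1 = (p.1.1, p.1.2) from rfl]
          apply hsub
          have hqv : ((⟨(p.1.1 : ℕ) + 1, hq1⟩ : Fin m) : ℕ) = (p.1.1 : ℕ) + 1 := rfl
          rw [abs_eq (by norm_num : (0:ℤ) ≤ 1)]
          omega
        rw [hMval] at hsum
        rcases mul_eq_zero.mp hsum with h | h
        · exact h
        · exact absurd h e_ne
    intro p
    exact key _ p rfl
end

section
/- Fix β > 0. For every parameter vector K ∈ ℝ^{m(2n-1)} and every (φ, λ, t) ∈ ℝ^{mn} × ℝ × [0,1) with H_K(φ, λ, t) = 0, one has φᵀφ = 1/(h₁h₂) and |λ| ≤ ρ(A(K)) + ρ(D) + β/(h₁h₂), where ρ(M) denotes the maximum of |μ| over all eigenvalues μ of the symmetric matrix M. In particular every connected component of the zero set of H_K in ℝ^{mn} × ℝ × [0,1) is bounded. -/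
open MeasureTheory

/-- The 2D homotopy map H_K(φ, λ, t). -/
noncomputable def homotopy2D {m n : ℕ} (h₁ h₂ β : ℝ)
    (D : Matrix (Fin m × Fin n) (Fin m × Fin n) ℝ)
    (a : Fin m → Fin n → ℝ) (b : Fin m → Fin (n - 1) → ℝ)
    (p : ((Fin m × Fin n) → ℝ) × ℝ × ℝ) : ((Fin m × Fin n) → ℝ) × ℝ :=
  ((1 - p.2.2) • (blockTridiag a b).mulVec p.1 + D.mulVec p.1
      + (p.2.2 * β) • (fun q => p.1 q ^ 3) - p.2.1 • p.1,
    (1 / 2) * (1 / (h₁ * h₂) - ∑ q, p.1 q ^ 2))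


open Matrix in
lemma quad_bound {ι : Type*} [Fintype ι] [DecidableEq ι]
    (M : Matrix ι ι ℝ) (hM : M.IsHermitian) (ρ : ℝ)
    (hub : ∀ μ : ℝ, (∃ y : ι → ℝ, y ≠ 0 ∧ M.mulVec y = μ • y) → |μ| ≤ ρ)
    (x : ι → ℝ) : |x ⬝ᵥ M.mulVec x| ≤ ρ * (∑ i, x i ^ 2) := by
  classical
  set e := hM.eigenvectorBasis with he
  set μ := hM.eigenvalues with hμ
  have hT : M.transpose = M := by
    ext i j
    conv_rhs => rw [← hM]
    simp [Matrix.conjTranspose_apply, Matrix.transpose_apply]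
  have hkey : ∀ i, (⇑(e i)) ⬝ᵥ (M.mulVec x) = μ i * ((⇑(e i)) ⬝ᵥ x) := by
    intro i
    have h1 : M.mulVec (⇑(e i)) = μ i • ⇑(e i) := hM.mulVec_eigenvectorBasis i
    calc (⇑(e i)) ⬝ᵥ (M.mulVec x) = (M.mulVec (⇑(e i))) ⬝ᵥ x := by
          rw [Matrix.dotProduct_mulVec, ← Matrix.mulVec_transpose, hT]
      _ = (μ i • (⇑(e i))) ⬝ᵥ x := by rw [h1]
      _ = μ i * ((⇑(e i)) ⬝ᵥ x) := by rw [smul_dotProduct]; rfl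
  have key1 : ∀ u v : ι → ℝ, ∑ i, ((⇑(e i)) ⬝ᵥ u) * ((⇑(e i)) ⬝ᵥ v) = u ⬝ᵥ v := by
    intro u v
    have h := e.sum_inner_mul_inner ((WithLp.equiv 2 _).symm u) ((WithLp.equiv 2 _).symm v)
    simpa [PiLp.inner_apply, RCLike.inner_apply, conj_trivial, dotProduct,
      mul_comm] using h
  have hexp : x ⬝ᵥ M.mulVec x = ∑ i, μ i * ((⇑(e i)) ⬝ᵥ x) ^ 2 := by
    rw [← key1 x (M.mulVec x)]
    refine Finset.sum_congr rfl fun i _ => ?_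
    rw [hkey i]
    ring
  have hnorm : ∑ i, ((⇑(e i)) ⬝ᵥ x) ^ 2 = ∑ i, x i ^ 2 := by
    have h := key1 x x
    have hrhs : x ⬝ᵥ x = ∑ i, x i ^ 2 := by simp [dotProduct, sq]
    rw [hrhs] at h
    rw [← h]
    exact Finset.sum_congr rfl fun i _ => pow_two _
  have hμb : ∀ i, |μ i| ≤ ρ := by
    intro i
    refine hub (μ i) ⟨⇑(e i), ?_, hM.mulVec_eigenvectorBasis i⟩
    intro h0
    exact (e.orthonormal.ne_zero i) (by ext j; exact congrFun h0 j)
  calc |x ⬝ᵥ M.mulVec x| = |∑ i, μ i * ((⇑(e i)) ⬝ᵥ x) ^ 2| := by rw [hexp]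
    _ ≤ ∑ i, |μ i * ((⇑(e i)) ⬝ᵥ x) ^ 2| := Finset.abs_sum_le_sum_abs _ _
    _ ≤ ∑ i, ρ * ((⇑(e i)) ⬝ᵥ x) ^ 2 := by
        refine Finset.sum_le_sum fun i _ => ?_
        rw [abs_mul, abs_pow, sq_abs]
        exact mul_le_mul_of_nonneg_right (hμb i) (sq_nonneg _)
    _ = ρ * ∑ i, x i ^ 2 := by rw [← Finset.mul_sum, hnorm]


lemma blockTridiag_isHermitian' {m n : ℕ} (a : Fin m → Fin n → ℝ) (b : Fin m → Fin (n - 1) → ℝ)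
    (A : Matrix (Fin m × Fin n) (Fin m × Fin n) ℝ)
    (hA : A = Matrix.of fun p q =>
    if p.1 = q.1 then
      (if p.2 = q.2 then a p.1 p.2 else 0)
        + (∑ j : Fin (n - 1), if (p.2 : ℕ) = (j : ℕ) ∧ (q.2 : ℕ) = (j : ℕ) + 1 then b p.1 j else 0)
        + (∑ j : Fin (n - 1), if (q.2 : ℕ) = (j : ℕ) ∧ (p.2 : ℕ) = (j : ℕ) + 1 then b p.1 j else 0)
    else 0) : A.IsHermitian := by
  subst hA
  ext p q
  rw [Matrix.conjTranspose_apply, star_trivial]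
  rcases p with ⟨i, j⟩
  rcases q with ⟨i', j'⟩
  simp only [Matrix.of_apply]
  by_cases h : i = i'
  · subst h
    rw [if_pos rfl, if_pos rfl]
    by_cases hj : j = j'
    · subst hj; ring
    · rw [if_neg hj, if_neg (fun hh => hj hh.symm)]; ring
  · rw [if_neg h, if_neg (fun hh => h hh.symm)]

open Matrix

/-- on the zero set of the 2D homotopy (with t ∈ [0,1)), the
eigenvector is normalized and |λ| ≤ ρ(A(K)) + ρ(D) + β/(h₁h₂); in particular
every connected component of the zero set is bounded. -/
theorem stmt_19 (m n : ℕ) (hm : 1 ≤ m) (hn : 1 ≤ n)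
    (h₁ h₂ : ℝ) (hh₁ : 0 < h₁) (hh₂ : 0 < h₂)
    (v : Fin m × Fin n → ℝ) (hv : ∀ p, 0 ≤ v p)
    (D : Matrix (Fin m × Fin n) (Fin m × Fin n) ℝ)
    (hDdiag : ∀ p : Fin m × Fin n, D p p = 1 / h₁ ^ 2 + 1 / h₂ ^ 2 + v p)
    (hDvert : ∀ (i : Fin m) (j j' : Fin n), |(j : ℤ) - (j' : ℤ)| = 1 →
      D (i, j) (i, j') = -(1 / (2 * h₂ ^ 2)))
    (hDhor : ∀ (i i' : Fin m) (j : Fin n), |(i : ℤ) - (i' : ℤ)| = 1 →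
      D (i, j) (i', j) = -(1 / (2 * h₁ ^ 2)))
    (hDzero : ∀ p q : Fin m × Fin n, p ≠ q →
      ¬(p.1 = q.1 ∧ |(p.2 : ℤ) - (q.2 : ℤ)| = 1) →
      ¬(p.2 = q.2 ∧ |(p.1 : ℤ) - (q.1 : ℤ)| = 1) → D p q = 0)
    (β : ℝ) (hβ : 0 < β)
    (a : Fin m → Fin n → ℝ) (b : Fin m → Fin (n - 1) → ℝ)
    (ρA ρD : ℝ)
    (hρA : IsGreatest { r : ℝ | ∃ μ : ℝ,
      (∃ y : Fin m × Fin n → ℝ, y ≠ 0 ∧ (blockTridiag a b).mulVec y = μ • y) ∧ r = |μ| } ρA)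
    (hρD : IsGreatest { r : ℝ | ∃ μ : ℝ,
      (∃ y : Fin m × Fin n → ℝ, y ≠ 0 ∧ D.mulVec y = μ • y) ∧ r = |μ| } ρD) :
    (∀ (φ : Fin m × Fin n → ℝ) (lam t : ℝ), 0 ≤ t → t < 1 →
      homotopy2D h₁ h₂ β D a b (φ, lam, t) = 0 →
        (∑ q, φ q ^ 2) = 1 / (h₁ * h₂) ∧
        |lam| ≤ ρA + ρD + β / (h₁ * h₂)) ∧
    (∀ p : ((Fin m × Fin n) → ℝ) × ℝ × ℝ,
      p ∈ {q : ((Fin m × Fin n) → ℝ) × ℝ × ℝ |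
        0 ≤ q.2.2 ∧ q.2.2 < 1 ∧ homotopy2D h₁ h₂ β D a b q = 0} →
      Bornology.IsBounded (connectedComponentIn
        {q : ((Fin m × Fin n) → ℝ) × ℝ × ℝ |
          0 ≤ q.2.2 ∧ q.2.2 < 1 ∧ homotopy2D h₁ h₂ β D a b q = 0} p)) := by
  set A := blockTridiag a b with hAdef
  have hAH : A.IsHermitian := by
    apply blockTridiag_isHermitian' a b
    rfl
  have hDH : D.IsHermitian := by
    ext p q
    rw [Matrix.conjTranspose_apply, star_trivial]
    by_cases hpq : p = q
    · subst hpq; rfl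
    rcases p with ⟨i, j⟩
    rcases q with ⟨i', j'⟩
    by_cases h1 : i = i' ∧ |(j : ℤ) - (j' : ℤ)| = 1
    · obtain ⟨hi, hj⟩ := h1
      subst hi
      rw [hDvert i j' j (by rwa [abs_sub_comm] at hj), hDvert i j j' hj]
    by_cases h2 : j = j' ∧ |(i : ℤ) - (i' : ℤ)| = 1
    · obtain ⟨hj, hi⟩ := h2
      subst hj
      rw [hDhor i' i j (by rwa [abs_sub_comm] at hi), hDhor i i' j hi]
    rw [hDzero (i, j) (i', j') hpq h1 h2,
      hDzero (i', j') (i, j) (Ne.symm hpq)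
        (fun ⟨ha, hb⟩ => h1 ⟨ha.symm, by rwa [abs_sub_comm] at hb⟩)
        (fun ⟨ha, hb⟩ => h2 ⟨ha.symm, by rwa [abs_sub_comm] at hb⟩)]
  have hρA0 : 0 ≤ ρA := by
    obtain ⟨μ, _, hr⟩ := hρA.1
    rw [hr]; exact abs_nonneg _
  have hρD0 : 0 ≤ ρD := by
    obtain ⟨μ, _, hr⟩ := hρD.1
    rw [hr]; exact abs_nonneg _
  have hubA : ∀ μ : ℝ, (∃ y : Fin m × Fin n → ℝ, y ≠ 0 ∧ A.mulVec y = μ • y) → |μ| ≤ ρA :=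
    fun μ hy => hρA.2 ⟨μ, hy, rfl⟩
  have hubD : ∀ μ : ℝ, (∃ y : Fin m × Fin n → ℝ, y ≠ 0 ∧ D.mulVec y = μ • y) → |μ| ≤ ρD :=
    fun μ hy => hρD.2 ⟨μ, hy, rfl⟩
  have hS : (0 : ℝ) < 1 / (h₁ * h₂) := by positivity
  set S : ℝ := 1 / (h₁ * h₂) with hSdef
  have key : ∀ (φ : Fin m × Fin n → ℝ) (lam t : ℝ), 0 ≤ t → t < 1 →
      homotopy2D h₁ h₂ β D a b (φ, lam, t) = 0 →
      (∑ q, φ q ^ 2) = S ∧ |lam| ≤ ρA + ρD + β * S := by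
    intro φ lam t ht0 ht1 hH
    rw [Prod.ext_iff] at hH
    obtain ⟨h1, h2⟩ := hH
    simp only [homotopy2D] at h1 h2
    have hsum : ∑ q, φ q ^ 2 = S := by
      have h2' : (1 / 2 : ℝ) * (S - ∑ q, φ q ^ 2) = 0 := h2
      linarith
    refine ⟨hsum, ?_⟩
    have hdot1 : φ ⬝ᵥ ((1 - t) • A.mulVec φ + D.mulVec φ
        + (t * β) • (fun q => φ q ^ 3) - lam • φ) = 0 := by
      rw [show ((1 - t) • A.mulVec φ + D.mulVec φ
        + (t * β) • (fun q => φ q ^ 3) - lam • φ) = 0 from h1]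
      simp [dotProduct]
    rw [dotProduct_sub, dotProduct_add, dotProduct_add,
      dotProduct_smul, dotProduct_smul, dotProduct_smul] at hdot1
    have hφ3 : φ ⬝ᵥ (fun q => φ q ^ 3) = ∑ q, φ q ^ 4 := by
      refine Finset.sum_congr rfl fun q _ => ?_
      ring
    have hφφ : φ ⬝ᵥ φ = ∑ q, φ q ^ 2 := by
      refine Finset.sum_congr rfl fun q _ => ?_
      ring
    rw [hφ3, hφφ, hsum] at hdot1
    simp only [smul_eq_mul] at hdot1
    have hQA : |φ ⬝ᵥ A.mulVec φ| ≤ ρA * S := by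
      have := quad_bound A hAH ρA hubA φ
      rwa [hsum] at this
    have hQD : |φ ⬝ᵥ D.mulVec φ| ≤ ρD * S := by
      have := quad_bound D hDH ρD hubD φ
      rwa [hsum] at this
    have h4 : ∑ q, φ q ^ 4 ≤ S * S := by
      have hb : ∀ q : Fin m × Fin n, φ q ^ 2 ≤ S := by
        intro q
        rw [← hsum]
        exact Finset.single_le_sum (fun i _ => sq_nonneg (φ i)) (Finset.mem_univ q)
      calc ∑ q, φ q ^ 4 = ∑ q, (φ q ^ 2) * (φ q ^ 2) := by
            exact Finset.sum_congr rfl fun q _ => by ring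
        _ ≤ ∑ q, (φ q ^ 2) * S :=
            Finset.sum_le_sum fun q _ => mul_le_mul_of_nonneg_left (hb q) (sq_nonneg _)
        _ = (∑ q, φ q ^ 2) * S := by rw [← Finset.sum_mul]
        _ = S * S := by rw [hsum]
    have h40 : 0 ≤ ∑ q, φ q ^ 4 :=
      Finset.sum_nonneg fun q _ => by positivity
    have hlamS : |lam| * S ≤ ((1 - t) * ρA + ρD + t * β * S) * S := by
      have hlamS' : lam * S = (1 - t) * (φ ⬝ᵥ A.mulVec φ) + φ ⬝ᵥ D.mulVec φ
          + (t * β) * (∑ q, φ q ^ 4) := by linarith [hdot1]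
      have habs : |lam * S| ≤ (1 - t) * |φ ⬝ᵥ A.mulVec φ| + |φ ⬝ᵥ D.mulVec φ|
          + (t * β) * (∑ q, φ q ^ 4) := by
        rw [hlamS']
        calc |(1 - t) * (φ ⬝ᵥ A.mulVec φ) + φ ⬝ᵥ D.mulVec φ + t * β * ∑ q, φ q ^ 4|
            ≤ |(1 - t) * (φ ⬝ᵥ A.mulVec φ) + φ ⬝ᵥ D.mulVec φ| + |t * β * ∑ q, φ q ^ 4| :=
              abs_add_le _ _
          _ ≤ |(1 - t) * (φ ⬝ᵥ A.mulVec φ)| + |φ ⬝ᵥ D.mulVec φ| + |t * β * ∑ q, φ q ^ 4| := by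
              linarith [abs_add_le ((1 - t) * (φ ⬝ᵥ A.mulVec φ)) (φ ⬝ᵥ D.mulVec φ)]
          _ = (1 - t) * |φ ⬝ᵥ A.mulVec φ| + |φ ⬝ᵥ D.mulVec φ| + t * β * ∑ q, φ q ^ 4 := by
              rw [abs_mul, abs_of_nonneg (by linarith : (0:ℝ) ≤ 1 - t),
                abs_mul, abs_of_nonneg (by positivity : (0:ℝ) ≤ t * β),
                abs_of_nonneg h40]
      have h1t : (0:ℝ) ≤ 1 - t := by linarith
      have := abs_mul lam S
      rw [abs_of_pos hS] at this
      nlinarith [mul_le_mul_of_nonneg_left hQA h1t, hQD,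
        mul_le_mul_of_nonneg_left h4 (by positivity : (0:ℝ) ≤ t * β)]
    have hfin : (1 - t) * ρA + ρD + t * β * S ≤ ρA + ρD + β * S := by
      nlinarith [mul_nonneg ht0 hρA0, mul_nonneg (by linarith : (0:ℝ) ≤ 1 - t) (mul_pos hβ hS).le]
    have := le_of_mul_le_mul_right (hlamS.trans (mul_le_mul_of_nonneg_right hfin hS.le)) hS
    exact this
  constructor
  · intro φ lam t ht0 ht1 hH
    obtain ⟨hsum, hlam⟩ := key φ lam t ht0 ht1 hH
    refine ⟨hsum, ?_⟩
    rw [div_eq_mul_one_div β (h₁ * h₂)]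
    exact hlam
  · intro p hp
    set Z := {q : ((Fin m × Fin n) → ℝ) × ℝ × ℝ |
        0 ≤ q.2.2 ∧ q.2.2 < 1 ∧ homotopy2D h₁ h₂ β D a b q = 0} with hZdef
    have hZb : Bornology.IsBounded Z := by
      set R : ℝ := Real.sqrt S + (ρA + ρD + β * S) + 1 with hRdef
      have hR0 : 0 ≤ Real.sqrt S := Real.sqrt_nonneg _
      have hβS : 0 ≤ β * S := (mul_pos hβ hS).le
      refine (Metric.isBounded_closedBall (x := (0 : ((Fin m × Fin n) → ℝ) × ℝ × ℝ))
        (r := R)).subset ?_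
      rintro ⟨φ, lam, t⟩ ⟨ht0, ht1, hH⟩
      obtain ⟨hsum, hlam⟩ := key φ lam t ht0 ht1 hH
      rw [mem_closedBall_zero_iff]
      rw [Prod.norm_def, Prod.norm_def]
      have hφ : ‖φ‖ ≤ R := by
        rw [pi_norm_le_iff_of_nonneg (by positivity)]
        intro q
        have hq2 : φ q ^ 2 ≤ S := by
          rw [← hsum]
          exact Finset.single_le_sum (fun i _ => sq_nonneg (φ i)) (Finset.mem_univ q)
        have : |φ q| ≤ Real.sqrt S := by
          rw [← Real.sqrt_sq_eq_abs]
          exact Real.sqrt_le_sqrt hq2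
        calc ‖φ q‖ = |φ q| := rfl
          _ ≤ Real.sqrt S := this
          _ ≤ R := by rw [hRdef]; linarith [abs_nonneg lam, hρA0, hρD0]
      have hlamR : ‖lam‖ ≤ R := by
        calc ‖lam‖ = |lam| := rfl
          _ ≤ ρA + ρD + β * S := hlam
          _ ≤ R := by rw [hRdef]; linarith
      have htR : ‖t‖ ≤ R := by
        have : ‖t‖ = |t| := rfl
        rw [this, abs_of_nonneg ht0, hRdef]
        linarith
      exact max_le hφ (max_le hlamR htR)
    exact hZb.subset (connectedComponentIn_subset Z p)
end
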